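/- Let G be a graph without a 2-factor and let (S,T) be a minimum barrier. Then for every component C of G−(S∪T) with e_G(C,T) even, there are no edges between T and C, i.e., e_G(T, V(C)) = 0. -/

import Mathlib

open SimpleGraph

namespace VizingTwoFactor

variable {V : Type*}

/-- The degree of a vertex, as the `ncard` of its neighbor set. -/
noncomputable def ndeg (G : SimpleGraph V) (v : V) : ℕ :=
  (G.neighborSet v).ncard

/-- `G` is bipartite with parts `X` and `T`. -/
def IsBipartiteWith (G : SimpleGraph V) (X T : Set V) : Prop :=
  Disjoint X T ∧ ∀ u v : V, G.Adj u v → (u ∈ X ∧ v ∈ T) ∨ (u ∈ T ∧ v ∈ X)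

/-- The set of neighbors of a set of vertices. -/
def NSet (G : SimpleGraph V) (A : Set V) : Set V :=
  {v | ∃ a ∈ A, G.Adj a v}

/-- `G` has a matching saturating the vertex set `T`. -/
def HasMatchingSaturating (G : SimpleGraph V) (T : Set V) : Prop :=
  ∃ M : G.Subgraph, M.IsMatching ∧ T ⊆ M.verts

/-- Number of (ordered) adjacent pairs with first coordinate in `A` and second in `B`;
for disjoint `A`, `B` this is the number of edges between `A` and `B`. -/
noncomputable def eBetween (G : SimpleGraph V) (A B : Set V) : ℕ :=
  {p : V × V | p.1 ∈ A ∧ p.2 ∈ B ∧ G.Adj p.1 p.2}.ncard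

/-- Number of neighbors of `v` inside `A`. -/
noncomputable def degIn (G : SimpleGraph V) (A : Set V) (v : V) : ℕ :=
  (G.neighborSet v ∩ A).ncard

/-- The vertex set (in `V`) of a connected component of an induced subgraph. -/
def csupp (G : SimpleGraph V) (U : Set V) (C : (G.induce U).ConnectedComponent) : Set V :=
  Subtype.val '' C.supp

/-- The odd components of `G − (S ∪ T)` w.r.t. `(S,T)`: components sending an odd
number of edges to `T`. -/
noncomputable def oddComps (G : SimpleGraph V) (S T : Set V) :
    Set ((G.induce (S ∪ T)ᶜ).ConnectedComponent) :=
  {C | Odd (eBetween G (csupp G (S ∪ T)ᶜ C) T)}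

/-- `h_G(S,T)`: the number of odd components. -/
noncomputable def hNum (G : SimpleGraph V) (S T : Set V) : ℕ :=
  (oddComps G S T).ncard

/-- `δ_G(S,T) = 2|S| + Σ_{v∈T} deg_{G−S}(v) − 2|T| − h_G(S,T)`. -/
noncomputable def deltaST (G : SimpleGraph V) (S T : Set V) : ℤ :=
  2 * S.ncard + (∑ᶠ v ∈ T, (degIn G Sᶜ v : ℤ)) - 2 * T.ncard - hNum G S T

/-- A barrier. -/
def IsBarrier (G : SimpleGraph V) (S T : Set V) : Prop :=
  Disjoint S T ∧ deltaST G S T ≤ -2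

/-- A minimum barrier: minimizes `|S ∪ T|` among barriers. -/
def IsMinBarrier (G : SimpleGraph V) (S T : Set V) : Prop :=
  IsBarrier G S T ∧ ∀ S' T' : Set V, IsBarrier G S' T' → (S ∪ T).ncard ≤ (S' ∪ T').ncard

/-- `G` has a 2-factor: a spanning subgraph in which every vertex has degree 2. -/
def HasTwoFactor (G : SimpleGraph V) : Prop :=
  ∃ H : SimpleGraph V, H ≤ G ∧ ∀ v : V, ndeg H v = 2

/-- `G` has a proper edge coloring with `k` colors. -/
def HasEdgeColoring (G : SimpleGraph V) (k : ℕ) : Prop :=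
  ∃ f : G.edgeSet → Fin k, ∀ e₁ e₂ : G.edgeSet, e₁ ≠ e₂ →
    (∃ v : V, v ∈ (e₁ : Sym2 V) ∧ v ∈ (e₂ : Sym2 V)) → f e₁ ≠ f e₂

/-- The chromatic index `χ'(G)`. -/
noncomputable def chromIdx (G : SimpleGraph V) : ℕ :=
  sInf {k | HasEdgeColoring G k}

/-- `Δ` is the maximum degree of `G`. -/
def IsMaxDegree (G : SimpleGraph V) (Δ : ℕ) : Prop :=
  (∀ v : V, ndeg G v ≤ Δ) ∧ ∃ v : V, ndeg G v = Δ

/-- `G` is `Δ`-critical: no isolated vertices, maximum degree `Δ`, `χ'(G) = Δ + 1`, and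
`χ'(G − e) = Δ` for every edge `e`. -/
def IsDeltaCritical (G : SimpleGraph V) (Δ : ℕ) : Prop :=
  (∀ v : V, ∃ u : V, G.Adj v u) ∧ IsMaxDegree G Δ ∧ chromIdx G = Δ + 1 ∧
    ∀ e ∈ G.edgeSet, chromIdx (G.deleteEdges {e}) = Δ

/-- `T` is an independent set in `G`. -/
def IsIndep (G : SimpleGraph V) (T : Set V) : Prop :=
  ∀ u ∈ T, ∀ v ∈ T, ¬ G.Adj u v

/-- The bipartite graph `H*` consisting of the edges of `G` between `V(G) \ T` and `T`. -/
def betweenGraph (G : SimpleGraph V) (T : Set V) : SimpleGraph V where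
  Adj u v := G.Adj u v ∧ ((u ∉ T ∧ v ∈ T) ∨ (u ∈ T ∧ v ∉ T))
  symm := ⟨fun u v h => ⟨h.1.symm, h.2.elim (fun h' => Or.inr ⟨h'.2, h'.1⟩)
    (fun h' => Or.inl ⟨h'.2, h'.1⟩)⟩⟩
  loopless := ⟨fun u h => G.loopless.irrefl u h.1⟩


section Aux

set_option linter.unusedSectionVars false
set_option linter.unusedVariables false

/-! ### Counting lemmas for `eBetween` -/

variable [Fintype V] (G : SimpleGraph V)

lemma eBetween_comm (A B : Set V) : eBetween G A B = eBetween G B A := by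
  unfold eBetween
  have : {p : V × V | p.1 ∈ A ∧ p.2 ∈ B ∧ G.Adj p.1 p.2} =
      Prod.swap '' {p : V × V | p.1 ∈ B ∧ p.2 ∈ A ∧ G.Adj p.1 p.2} := by
    ext ⟨a, b⟩
    simp only [Set.mem_setOf_eq, Set.mem_image, Prod.exists]
    constructor
    · rintro ⟨ha, hb, hadj⟩; exact ⟨b, a, ⟨hb, ha, hadj.symm⟩, rfl⟩
    · rintro ⟨x, y, ⟨hx, hy, hadj⟩, h⟩
      obtain ⟨rfl, rfl⟩ : y = a ∧ x = b := by
        simpa [Prod.ext_iff] using h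
      exact ⟨hy, hx, hadj.symm⟩
  rw [this, Set.ncard_image_of_injective _ Prod.swap_injective]

lemma eBetween_union_right (A B₁ B₂ : Set V) (h : Disjoint B₁ B₂) :
    eBetween G A (B₁ ∪ B₂) = eBetween G A B₁ + eBetween G A B₂ := by
  classical
  unfold eBetween
  have hset : {p : V × V | p.1 ∈ A ∧ p.2 ∈ B₁ ∪ B₂ ∧ G.Adj p.1 p.2} =
      {p : V × V | p.1 ∈ A ∧ p.2 ∈ B₁ ∧ G.Adj p.1 p.2} ∪
      {p : V × V | p.1 ∈ A ∧ p.2 ∈ B₂ ∧ G.Adj p.1 p.2} := by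
    ext ⟨a, b⟩
    simp only [Set.mem_setOf_eq, Set.mem_union]
    tauto
  rw [hset, Set.ncard_union_eq ?_ (Set.toFinite _) (Set.toFinite _)]
  rw [Set.disjoint_left]
  rintro ⟨a, b⟩ ⟨_, hb1, _⟩ ⟨_, hb2, _⟩
  exact h.le_bot ⟨hb1, hb2⟩

lemma eBetween_insert_right (A B : Set V) (t : V) (ht : t ∉ B) :
    eBetween G A (insert t B) = eBetween G A {t} + eBetween G A B := by
  rw [Set.insert_eq, eBetween_union_right _ _ _ _ (by simpa using ht)]

lemma degIn_eq_eBetween (B : Set V) (t : V) : degIn G B t = eBetween G {t} B := by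
  unfold degIn eBetween
  have : {p : V × V | p.1 ∈ ({t} : Set V) ∧ p.2 ∈ B ∧ G.Adj p.1 p.2} =
      (fun b => (t, b)) '' (G.neighborSet t ∩ B) := by
    ext ⟨a, b⟩
    simp only [Set.mem_setOf_eq, Set.mem_singleton_iff, Set.mem_image, Set.mem_inter_iff,
      mem_neighborSet]
    constructor
    · rintro ⟨rfl, hb, hadj⟩; exact ⟨b, ⟨hadj, hb⟩, rfl⟩
    · rintro ⟨x, ⟨hadj, hx⟩, h⟩
      obtain ⟨rfl, rfl⟩ : t = a ∧ x = b := by simpa [Prod.ext_iff] using h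
      exact ⟨rfl, hx, hadj⟩
  rw [this, Set.ncard_image_of_injective _ (fun x y h => by simpa [Prod.ext_iff] using h)]

lemma eBetween_eq_zero (A B : Set V) (h : ∀ a ∈ A, ∀ b ∈ B, ¬ G.Adj a b) :
    eBetween G A B = 0 := by
  unfold eBetween
  rw [Set.ncard_eq_zero (Set.toFinite _)]
  ext ⟨a, b⟩
  simp only [Set.mem_setOf_eq, Set.mem_empty_iff_false, iff_false, not_and]
  exact fun ha hb => h a ha b hb

lemma eBetween_pos (A B : Set V) {a b : V} (ha : a ∈ A) (hb : b ∈ B) (hadj : G.Adj a b) :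
    0 < eBetween G A B := by
  unfold eBetween
  rw [Set.ncard_pos (Set.toFinite _)]
  exact ⟨(a, b), ha, hb, hadj⟩

lemma exists_adj_of_eBetween_ne_zero (A B : Set V) (h : eBetween G A B ≠ 0) :
    ∃ a ∈ A, ∃ b ∈ B, G.Adj a b := by
  have : {p : V × V | p.1 ∈ A ∧ p.2 ∈ B ∧ G.Adj p.1 p.2}.Nonempty := by
    rw [Set.nonempty_iff_ne_empty]
    intro he
    exact h (by unfold eBetween; rw [he]; simp)
  obtain ⟨⟨a, b⟩, ha, hb, hadj⟩ := this
  exact ⟨a, ha, b, hb, hadj⟩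

lemma eBetween_biUnion_right {ι : Type*} (A : Set V) (s : Finset ι) (B : ι → Set V)
    (h : ∀ i ∈ s, ∀ j ∈ s, i ≠ j → Disjoint (B i) (B j)) :
    eBetween G A (⋃ i ∈ s, B i) = ∑ i ∈ s, eBetween G A (B i) := by
  classical
  induction s using Finset.induction_on with
  | empty => simp [eBetween_eq_zero]
  | insert a s hnotmem ih =>
    rw [Finset.sum_insert hnotmem]
    have : (⋃ i ∈ insert a s, B i) = B a ∪ ⋃ i ∈ s, B i := by
      simp
    rw [this, eBetween_union_right]
    · rw [ih (fun i hi j hj hij => h i (Finset.mem_insert_of_mem hi) j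
        (Finset.mem_insert_of_mem hj) hij)]
    · apply Set.disjoint_iUnion₂_right.mpr
      intro i hi
      exact h a (Finset.mem_insert_self a s) i (Finset.mem_insert_of_mem hi)
        (fun he => hnotmem (he ▸ hi))

/-! ### Walk transfer lemmas -/

lemma reachable_induce_of_support {U U' : Set V} {x y : ↥U'}
    (w : (G.induce U').Walk x y) (hsupp : ∀ z ∈ w.support, (z : V) ∈ U) :
    ∀ (hx : (x : V) ∈ U) (hy : (y : V) ∈ U),
      (G.induce U).Reachable ⟨x, hx⟩ ⟨y, hy⟩ := by
  induction w with
  | nil =>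
    intro hx hy
    exact Reachable.refl _
  | cons h w ih =>
    rename_i u z _
    intro hx hy
    have hz : (z : V) ∈ U := hsupp z (by simp)
    have hadj : (G.induce U).Adj ⟨u, hx⟩ ⟨z, hz⟩ := by
      simpa using h
    exact hadj.reachable.trans (ih (fun a ha => hsupp a (by simp [ha])) hz hy)

lemma exists_neighbor_reach {U : Set V} {t : V} :
    ∀ (n : ℕ) (x : ↥(insert t U : Set V))
      (w : (G.induce (insert t U : Set V)).Walk ⟨t, Set.mem_insert t U⟩ x)
      (_ : w.length ≤ n) (hxt : (x : V) ≠ t),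
      ∃ z, ∃ hz : z ∈ U, G.Adj t z ∧
        (G.induce U).Reachable ⟨z, hz⟩ ⟨x, (x.2.resolve_left hxt)⟩ := by
  intro n
  induction n with
  | zero =>
    intro x w hw hxt
    interval_cases h : w.length
    · have := w.eq_of_length_eq_zero h
      exact absurd (congrArg Subtype.val this.symm) hxt
  | succ n ih =>
    intro x w hw hxt
    cases w with
    | nil => exact absurd rfl hxt
    | @cons _ z _ h w =>
      classical
      by_cases hmem : (⟨t, Set.mem_insert t U⟩ : ↥(insert t U : Set V)) ∈ w.support
      · refine ih x (w.dropUntil _ hmem) ?_ hxt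
        have h1 := SimpleGraph.Walk.length_dropUntil_le w hmem
        simp only [Walk.length_cons] at hw
        omega
      · have hzU : (z : V) ∈ U := by
          have hne : (z : V) ≠ t := fun he => hmem (by
            have : z = (⟨t, Set.mem_insert t U⟩ : ↥(insert t U : Set V)) := Subtype.ext he
            exact this ▸ w.start_mem_support)
          exact z.2.resolve_left hne
        have hadj : G.Adj t (z : V) := by simpa using h
        refine ⟨z, hzU, hadj, ?_⟩
        apply reachable_induce_of_support G w
        intro a ha
        have hne : (a : V) ≠ t := fun he => hmem (by
          have : a = (⟨t, Set.mem_insert t U⟩ : ↥(insert t U : Set V)) := Subtype.ext he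
          exact this ▸ ha)
        exact a.2.resolve_left hne

/-! ### Connected component surgery -/

variable (U : Set V) (t : V)

lemma mem_csupp {U : Set V} {C : (G.induce U).ConnectedComponent} {x : V} :
    x ∈ csupp G U C ↔ ∃ hx : x ∈ U, (G.induce U).connectedComponentMk ⟨x, hx⟩ = C := by
  unfold csupp
  constructor
  · rintro ⟨⟨a, ha⟩, haC, rfl⟩
    exact ⟨ha, (ConnectedComponent.mem_supp_iff _ _).mp haC⟩
  · rintro ⟨hx, hC⟩
    exact ⟨⟨x, hx⟩, (ConnectedComponent.mem_supp_iff _ _).mpr hC, rfl⟩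

lemma csupp_subset {U : Set V} (C : (G.induce U).ConnectedComponent) : csupp G U C ⊆ U := by
  rintro x hx
  rw [mem_csupp] at hx
  exact hx.1

lemma csupp_disjoint {U : Set V} {C₁ C₂ : (G.induce U).ConnectedComponent} (h : C₁ ≠ C₂) :
    Disjoint (csupp G U C₁) (csupp G U C₂) := by
  rw [Set.disjoint_left]
  intro x hx1 hx2
  rw [mem_csupp] at hx1 hx2
  obtain ⟨hx, h1⟩ := hx1
  obtain ⟨hx', h2⟩ := hx2
  exact h (h1 ▸ h2 ▸ rfl)

lemma mem_csupp_self {U : Set V} {x : V} (hx : x ∈ U) :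
    x ∈ csupp G U ((G.induce U).connectedComponentMk ⟨x, hx⟩) :=
  mem_csupp G |>.mpr ⟨hx, rfl⟩

/-- The inclusion homomorphism from `G.induce U` to `G.induce (insert t U)`. -/
def homUp : G.induce U →g G.induce (insert t U : Set V) where
  toFun x := ⟨(x : V), Set.mem_insert_of_mem t x.2⟩
  map_rel' := fun h => by simpa using h

/-- The induced map on connected components. -/
def psi (C : (G.induce U).ConnectedComponent) :
    (G.induce (insert t U : Set V)).ConnectedComponent :=
  C.map (homUp G U t)

/-- The component of `t` in `G.induce (insert t U)`. -/
def tComp : (G.induce (insert t U : Set V)).ConnectedComponent :=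
  (G.induce (insert t U : Set V)).connectedComponentMk ⟨t, Set.mem_insert t U⟩

/-- `C` contains a `G`-neighbour of `t`. -/
def AdjT (C : (G.induce U).ConnectedComponent) : Prop :=
  ∃ z ∈ csupp G U C, G.Adj t z

lemma psi_mk (x : V) (hx : x ∈ U) :
    psi G U t ((G.induce U).connectedComponentMk ⟨x, hx⟩)
      = (G.induce (insert t U : Set V)).connectedComponentMk ⟨x, Set.mem_insert_of_mem t hx⟩ :=
  rfl

lemma csupp_subset_psi {C : (G.induce U).ConnectedComponent} :
    csupp G U C ⊆ csupp G (insert t U) (psi G U t C) := by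
  intro x hx
  rw [mem_csupp] at hx ⊢
  obtain ⟨hx, rfl⟩ := hx
  exact ⟨Set.mem_insert_of_mem t hx, rfl⟩

variable {U t}

lemma psi_eq_tComp_iff (htU : t ∉ U) {C : (G.induce U).ConnectedComponent} :
    psi G U t C = tComp G U t ↔ AdjT G U t C := by
  constructor
  · intro h
    induction C using ConnectedComponent.ind with
    | _ c =>
      obtain ⟨c, hc⟩ := c
      rw [psi_mk] at h
      have hreach : (G.induce (insert t U : Set V)).Reachable
          ⟨t, Set.mem_insert t U⟩ ⟨c, Set.mem_insert_of_mem t hc⟩ :=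
        ConnectedComponent.eq.mp h.symm
      obtain ⟨w⟩ := hreach
      have hct : c ≠ t := fun he => htU (he ▸ hc)
      obtain ⟨z, hz, hadj, hr⟩ := exists_neighbor_reach G w.length _ w le_rfl hct
      refine ⟨z, ?_, hadj⟩
      rw [mem_csupp]
      exact ⟨hz, ConnectedComponent.sound hr⟩
  · rintro ⟨z, hz, hadj⟩
    rw [mem_csupp] at hz
    obtain ⟨hzU, rfl⟩ := hz
    rw [psi_mk]
    apply ConnectedComponent.sound
    apply Reachable.symm
    apply Adj.reachable
    simpa using hadj

lemma reach_down (htU : t ∉ U) {x y : ↥(insert t U : Set V)}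
    (hr : (G.induce (insert t U : Set V)).Reachable x y)
    (hne : (G.induce (insert t U : Set V)).connectedComponentMk x ≠ tComp G U t) :
    ∃ (hx : (x : V) ∈ U) (hy : (y : V) ∈ U), (G.induce U).Reachable ⟨x, hx⟩ ⟨y, hy⟩ := by
  classical
  obtain ⟨w⟩ := hr
  have hsupp : ∀ z ∈ w.support, (z : V) ∈ U := by
    intro z hz
    have h1 : (G.induce (insert t U : Set V)).connectedComponentMk x
        = (G.induce (insert t U : Set V)).connectedComponentMk z :=
      ConnectedComponent.sound ⟨w.takeUntil z hz⟩
    have hzt : (z : V) ≠ t := by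
      intro he
      apply hne
      rw [h1]
      unfold tComp
      congr 1
      exact Subtype.ext he
    exact z.2.resolve_left hzt
  have hx : (x : V) ∈ U := hsupp x w.start_mem_support
  have hy : (y : V) ∈ U := hsupp y w.end_mem_support
  exact ⟨hx, hy, reachable_induce_of_support G w hsupp hx hy⟩

lemma psi_ne_tComp (htU : t ∉ U) {C : (G.induce U).ConnectedComponent}
    (h : ¬ AdjT G U t C) : psi G U t C ≠ tComp G U t :=
  fun he => h ((psi_eq_tComp_iff G htU).mp he)

lemma csupp_psi (htU : t ∉ U) {C : (G.induce U).ConnectedComponent}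
    (h : ¬ AdjT G U t C) : csupp G (insert t U) (psi G U t C) = csupp G U C := by
  apply Set.Subset.antisymm _ (csupp_subset_psi G U t)
  induction C using ConnectedComponent.ind with
  | _ c =>
    obtain ⟨c, hc⟩ := c
    intro y hy
    rw [mem_csupp] at hy
    obtain ⟨hy, hyC⟩ := hy
    rw [psi_mk] at hyC
    have hr := ConnectedComponent.exact hyC
    obtain ⟨hy', hc', hr'⟩ := reach_down G htU hr (by
      rw [hyC]; exact psi_ne_tComp G htU h)
    rw [mem_csupp]
    exact ⟨hy', ConnectedComponent.sound hr'⟩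

lemma psi_injOn (htU : t ∉ U) {C₁ C₂ : (G.induce U).ConnectedComponent}
    (h1 : ¬ AdjT G U t C₁) (heq : psi G U t C₁ = psi G U t C₂) : C₁ = C₂ := by
  induction C₁ using ConnectedComponent.ind with
  | _ c₁ =>
  induction C₂ using ConnectedComponent.ind with
  | _ c₂ =>
    obtain ⟨c₁, hc₁⟩ := c₁
    obtain ⟨c₂, hc₂⟩ := c₂
    rw [psi_mk, psi_mk] at heq
    have hr := ConnectedComponent.exact heq
    obtain ⟨hx, hy, hr'⟩ := reach_down G htU hr (by
      intro hco
      apply psi_ne_tComp G htU h1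
      rw [psi_mk]
      exact hco)
    exact ConnectedComponent.sound hr'

lemma comp_up_surj (htU : t ∉ U) (C' : (G.induce (insert t U : Set V)).ConnectedComponent)
    (hne : C' ≠ tComp G U t) :
    ∃ C : (G.induce U).ConnectedComponent, ¬ AdjT G U t C ∧ psi G U t C = C' := by
  induction C' using ConnectedComponent.ind with
  | _ x =>
    obtain ⟨x, hx⟩ := x
    have hxt : x ≠ t := by
      intro he
      apply hne
      unfold tComp
      congr 1
      exact Subtype.ext he
    have hxU : x ∈ U := hx.resolve_left hxt
    refine ⟨(G.induce U).connectedComponentMk ⟨x, hxU⟩, ?_, psi_mk G U t x hxU⟩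
    intro hA
    apply hne
    rw [← psi_mk G U t x hxU]
    exact (psi_eq_tComp_iff G htU).mpr hA

lemma csupp_tComp (htU : t ∉ U) :
    csupp G (insert t U) (tComp G U t)
      = insert t (⋃ C ∈ {C : (G.induce U).ConnectedComponent | AdjT G U t C}, csupp G U C) := by
  apply Set.Subset.antisymm
  · intro y hy
    rw [mem_csupp] at hy
    obtain ⟨hy, hyD⟩ := hy
    by_cases hyt : y = t
    · rw [hyt]; exact Set.mem_insert t _
    · apply Set.mem_insert_of_mem
      have hr : (G.induce (insert t U : Set V)).Reachable
          ⟨t, Set.mem_insert t U⟩ ⟨y, hy⟩ := (ConnectedComponent.exact hyD).symm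
      obtain ⟨w⟩ := hr
      obtain ⟨z, hz, hadj, hr'⟩ := exists_neighbor_reach G w.length _ w le_rfl hyt
      have hyU : y ∈ U := hy.resolve_left hyt
      have hmem : y ∈ csupp G U ((G.induce U).connectedComponentMk ⟨z, hz⟩) := by
        rw [mem_csupp]
        exact ⟨hyU, (ConnectedComponent.sound hr').symm⟩
      exact Set.mem_biUnion (show ((G.induce U).connectedComponentMk ⟨z, hz⟩)
        ∈ {C : (G.induce U).ConnectedComponent | AdjT G U t C}
        from ⟨z, mem_csupp_self G hz, hadj⟩) hmem
  · apply Set.insert_subset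
    · exact mem_csupp_self G (Set.mem_insert t U)
    · intro y hy
      rw [Set.mem_iUnion₂] at hy
      obtain ⟨C, hC, hyC⟩ := hy
      have := csupp_subset_psi G U t (C := C) hyC
      rwa [(psi_eq_tComp_iff G htU).mpr hC] at this

end Aux

/-- The odd components of `G.induce U` with respect to an arbitrary target set `T`. -/
noncomputable def oddSet (G : SimpleGraph V) (U T : Set V) :
    Set ((G.induce U).ConnectedComponent) :=
  {C | Odd (eBetween G (csupp G U C) T)}

lemma oddComps_eq_oddSet (G : SimpleGraph V) (S T : Set V) :
    oddComps G S T = oddSet G (S ∪ T)ᶜ T := rfl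

section Master

set_option linter.unusedSectionVars false

variable [Fintype V]

/-- The master counting lemma for the surgery `T ↦ T \ {t}`. -/
lemma surgery_main (G : SimpleGraph V) (U T' : Set V) (t : V)
    (htU : t ∉ U) (htT' : t ∉ T')
    (hC₀ : ∃ C₀ : (G.induce U).ConnectedComponent, AdjT G U t C₀ ∧
      Even (eBetween G (csupp G U C₀) (insert t T'))) :
    (oddSet G U (insert t T')).ncard + 2 ≤
      (oddSet G (insert t U) T').ncard + (eBetween G {t} T' + eBetween G {t} U) := by
  classical
  haveI : Fintype ((G.induce U).ConnectedComponent) := Fintype.ofFinite _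
  obtain ⟨C₀, hC₀A, hC₀even⟩ := hC₀
  set m : (G.induce U).ConnectedComponent → ℕ :=
    fun C => eBetween G (csupp G U C) {t} with hm
  have mzero : ∀ C, ¬ AdjT G U t C → m C = 0 := by
    intro C hC
    apply eBetween_eq_zero
    intro a ha b hb
    rw [Set.mem_singleton_iff] at hb
    subst hb
    intro hadj
    exact hC ⟨a, ha, hadj.symm⟩
  have comm' : ∀ C, eBetween G {t} (csupp G U C) = m C :=
    fun C => eBetween_comm G _ _
  set Afin := Finset.univ.filter (fun C => AdjT G U t C) with hAfin
  have hUU : U = ⋃ C ∈ (Finset.univ : Finset ((G.induce U).ConnectedComponent)), csupp G U C := by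
    ext x
    constructor
    · intro hx
      exact Set.mem_biUnion (Finset.mem_univ _) (mem_csupp_self G hx)
    · intro hx
      rw [Set.mem_iUnion₂] at hx
      obtain ⟨C, _, hC⟩ := hx
      exact csupp_subset G C hC
  have htUsum : eBetween G {t} U = ∑ C ∈ Afin, m C := by
    conv_lhs => rw [hUU]
    rw [eBetween_biUnion_right G {t} _ _ (fun i _ j _ hij => csupp_disjoint G hij)]
    rw [Finset.sum_congr rfl (fun C _ => comm' C)]
    symm
    apply Finset.sum_subset (Finset.subset_univ _)
    intro C _ hC
    exact mzero C (by simpa [hAfin] using hC)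
  have hDsupp' : csupp G (insert t U) (tComp G U t)
      = insert t (⋃ C ∈ Afin, csupp G U C) := by
    rw [csupp_tComp G htU]
    congr 1
    ext x
    simp only [Set.mem_iUnion, Set.mem_setOf_eq, hAfin, Finset.mem_filter, Finset.mem_univ,
      true_and, exists_prop]
  have htnotin : t ∉ ⋃ C ∈ Afin, csupp G U C := by
    intro h
    rw [Set.mem_iUnion₂] at h
    obtain ⟨C, _, hC⟩ := h
    exact htU (csupp_subset G C hC)
  have hAdisj : ∀ i ∈ Afin, ∀ j ∈ Afin, i ≠ j → Disjoint (csupp G U i) (csupp G U j) :=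
    fun i _ j _ hij => csupp_disjoint G hij
  have eD'_eq : eBetween G (csupp G (insert t U) (tComp G U t)) T'
      = eBetween G {t} T' + ∑ C ∈ Afin, eBetween G (csupp G U C) T' := by
    rw [hDsupp', eBetween_comm, eBetween_insert_right G T' _ t htnotin,
      eBetween_biUnion_right G T' Afin _ hAdisj, eBetween_comm G T' {t}]
    congr 1
    exact Finset.sum_congr rfl fun C _ => eBetween_comm G T' _
  have eT_split : ∀ C : (G.induce U).ConnectedComponent,
      eBetween G (csupp G U C) (insert t T') = m C + eBetween G (csupp G U C) T' :=
    fun C => eBetween_insert_right G _ T' t htT'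
  set aOddF := Afin.filter (fun C => Odd (eBetween G (csupp G U C) (insert t T'))) with haOddF
  have parity : Even ((∑ C ∈ Afin, eBetween G (csupp G U C) (insert t T')) + aOddF.card) := by
    rw [Nat.even_add]
    exact Finset.even_sum_iff_even_card_odd _
  have cardA : aOddF.card + 1 ≤ Afin.card := by
    have hsub : aOddF ⊆ Afin := Finset.filter_subset _ _
    have hC₀mem : C₀ ∈ Afin := by simp [hAfin, hC₀A]
    have hC₀not : C₀ ∉ aOddF := by
      simp only [haOddF, Finset.mem_filter, not_and]
      intro _
      exact Nat.not_odd_iff_even.mpr hC₀even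
    have := Finset.card_lt_card ((Finset.ssubset_iff_of_subset hsub).mpr ⟨C₀, hC₀mem, hC₀not⟩)
    omega
  have sumM : Afin.card ≤ ∑ C ∈ Afin, m C := by
    calc Afin.card = ∑ _C ∈ Afin, 1 := by simp
    _ ≤ ∑ C ∈ Afin, m C := Finset.sum_le_sum (fun C hC => by
        have hA : AdjT G U t C := by simpa [hAfin] using hC
        obtain ⟨z, hz, hadj⟩ := hA
        exact eBetween_pos G (csupp G U C) {t} hz rfl hadj.symm)
  set Xset : Set ((G.induce U).ConnectedComponent) :=
    {C | Odd (eBetween G (csupp G U C) (insert t T')) ∧ ¬ AdjT G U t C} with hXset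
  have h_decomp : (oddSet G U (insert t T')).ncard = Xset.ncard + aOddF.card := by
    have hsplit : oddSet G U (insert t T') = Xset ∪
        {C | Odd (eBetween G (csupp G U C) (insert t T')) ∧ AdjT G U t C} := by
      ext C
      simp only [oddSet, hXset, Set.mem_setOf_eq, Set.mem_union]
      tauto
    rw [hsplit, Set.ncard_union_eq ?_ (Set.toFinite _) (Set.toFinite _)]
    · congr 1
      rw [Set.ncard_eq_toFinset_card']
      rw [show ({C | Odd (eBetween G (csupp G U C) (insert t T')) ∧ AdjT G U t C}).toFinset
        = aOddF from ?_]
      ext C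
      simp only [Set.mem_toFinset, Set.mem_setOf_eq, haOddF, hAfin, Finset.mem_filter,
        Finset.mem_univ, true_and]
      tauto
    · rw [Set.disjoint_left]
      rintro C ⟨_, hC⟩ ⟨_, hC'⟩
      exact hC hC'
  have injOnX : Set.InjOn (psi G U t) Xset :=
    fun C₁ h1 C₂ _ he => psi_injOn G htU h1.2 he
  have him : oddSet G (insert t U) T' \ {tComp G U t} = psi G U t '' Xset := by
    ext C'
    constructor
    · rintro ⟨hodd, hne⟩
      rw [Set.mem_singleton_iff] at hne
      obtain ⟨C, hCA, rfl⟩ := comp_up_surj G htU C' hne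
      refine ⟨C, ⟨?_, hCA⟩, rfl⟩
      rw [oddSet, Set.mem_setOf_eq, csupp_psi G htU hCA] at hodd
      rw [eT_split C, mzero C hCA, zero_add]
      exact hodd
    · rintro ⟨C, ⟨hoddC, hCA⟩, rfl⟩
      constructor
      · rw [oddSet, Set.mem_setOf_eq, csupp_psi G htU hCA]
        rw [eT_split C, mzero C hCA, zero_add] at hoddC
        exact hoddC
      · rw [Set.mem_singleton_iff]
        exact psi_ne_tComp G htU hCA
  have h'_decomp : (oddSet G (insert t U) T').ncard
      = Xset.ncard + (if Odd (eBetween G (csupp G (insert t U) (tComp G U t)) T')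
        then 1 else 0) := by
    have himcard : (psi G U t '' Xset).ncard = Xset.ncard := Set.ncard_image_of_injOn injOnX
    by_cases hD : tComp G U t ∈ oddSet G (insert t U) T'
    · rw [if_pos (show Odd _ from hD)]
      rw [← Set.ncard_diff_singleton_add_one hD (Set.toFinite _), him, himcard]
    · rw [if_neg (show ¬ Odd _ from hD), add_zero]
      have hd : oddSet G (insert t U) T' \ {tComp G U t} = oddSet G (insert t U) T' :=
        Set.diff_singleton_eq_self hD
      rw [← hd, him, himcard]
  rw [h_decomp, h'_decomp, htUsum]
  have key : eBetween G {t} T' + ∑ C ∈ Afin, eBetween G (csupp G U C) (insert t T')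
      = eBetween G (csupp G (insert t U) (tComp G U t)) T' + ∑ C ∈ Afin, m C := by
    rw [eD'_eq, Finset.sum_congr rfl fun C _ => eT_split C, Finset.sum_add_distrib]
    ring
  have hge : aOddF.card + 1 ≤ ∑ C ∈ Afin, m C := le_trans cardA sumM
  obtain ⟨k, hk⟩ := parity
  have arith : ∀ (X a q s1 s2 eD k : ℕ), q + s1 = eD + s2 → s1 + a = k + k →
      a + 1 ≤ s2 → X + a + 2 ≤ X + (if Odd eD then 1 else 0) + (q + s2) := by
    intro X a q s1 s2 eD k h1 h2 h3
    rcases Nat.even_or_odd eD with he | ho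
    · rw [if_neg (by simpa [Nat.not_odd_iff_even] using he)]
      obtain ⟨e, rfl⟩ := he
      omega
    · rw [if_pos ho]
      omega
  exact arith _ _ _ _ _ _ _ key hk hge

end Master

theorem vizing_stmt_8 [Fintype V] (G : SimpleGraph V) (S T : Set V)
    (hG : ¬ HasTwoFactor G) (hmin : IsMinBarrier G S T) :
    ∀ C : (G.induce (S ∪ T)ᶜ).ConnectedComponent,
      Even (eBetween G (csupp G (S ∪ T)ᶜ C) T) →
      eBetween G (csupp G (S ∪ T)ᶜ C) T = 0 := by
  classical
  obtain ⟨⟨hdisj, hdelta⟩, hminimal⟩ := hmin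
  intro C heven
  by_contra hne
  obtain ⟨c₀, hc₀, t, htT, hadj⟩ := exists_adj_of_eBetween_ne_zero G _ _ hne
  have htS : t ∉ S := fun h => Set.disjoint_left.mp hdisj h htT
  have htT' : t ∉ T \ {t} := by simp
  have hTins : T = insert t (T \ {t}) := by
    rw [Set.insert_diff_singleton, Set.insert_eq_self.mpr htT]
  have htU : t ∉ (S ∪ T)ᶜ := by
    simp only [Set.mem_compl_iff, Set.mem_union, not_not]
    exact Or.inr htT
  have hU'eq : (S ∪ T \ {t})ᶜ = insert t (S ∪ T)ᶜ := by
    ext x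
    simp only [Set.mem_compl_iff, Set.mem_union, Set.mem_insert_iff, Set.mem_diff,
      Set.mem_singleton_iff]
    by_cases hx : x = t
    · subst hx
      simp [htS, htT]
    · tauto
  have hC₀A : AdjT G (S ∪ T)ᶜ t C := ⟨c₀, hc₀, hadj.symm⟩
  have hmaster := surgery_main G (S ∪ T)ᶜ (T \ {t}) t htU htT'
    ⟨C, hC₀A, by rwa [← hTins]⟩
  have hdisj' : Disjoint S (T \ {t}) := hdisj.mono_right Set.diff_subset
  have hdisjT'U : Disjoint (T \ {t}) (S ∪ T)ᶜ := by
    rw [Set.disjoint_left]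
    intro x hx
    simp only [Set.mem_compl_iff, Set.mem_union, not_not]
    exact Or.inr hx.1
  have hScompl : Sᶜ = insert t (T \ {t} ∪ (S ∪ T)ᶜ) := by
    ext x
    simp only [Set.mem_compl_iff, Set.mem_union, Set.mem_insert_iff, Set.mem_diff,
      Set.mem_singleton_iff]
    by_cases hx : x = t
    · subst hx
      simp [htS]
    · constructor
      · intro hxS
        by_cases hxT : x ∈ T
        · exact Or.inr (Or.inl ⟨hxT, hx⟩)
        · exact Or.inr (Or.inr (by simp [hxS, hxT]))
      · rintro (h | h | h)
        · exact absurd h hx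
        · exact fun hxS => Set.disjoint_left.mp hdisj hxS h.1
        · tauto
  have hdegt : degIn G Sᶜ t
      = eBetween G {t} (T \ {t}) + eBetween G {t} (S ∪ T)ᶜ := by
    rw [degIn_eq_eBetween, hScompl,
      eBetween_insert_right G {t} _ t (by
        simp only [Set.mem_union]
        rintro (h | h)
        · exact htT' h
        · exact htU h),
      eBetween_union_right G {t} _ _ hdisjT'U,
      eBetween_eq_zero G {t} {t} (by
        rintro a ha b hb
        rw [Set.mem_singleton_iff] at ha hb
        subst ha; subst hb
        exact G.loopless.irrefl _)]
    omega
  have hTfin : ((T \ {t}).ncard : ℤ) + 1 = T.ncard := by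
    exact_mod_cast congrArg (Nat.cast : ℕ → ℤ)
      (Set.ncard_diff_singleton_add_one htT (Set.toFinite _))
  have hsum : (∑ᶠ v ∈ T, (degIn G Sᶜ v : ℤ))
      = (degIn G Sᶜ t : ℤ) + ∑ᶠ v ∈ T \ {t}, (degIn G Sᶜ v : ℤ) := by
    conv_lhs => rw [hTins]
    exact finsum_mem_insert _ htT' (Set.toFinite _)
  have hNum' : hNum G S (T \ {t}) = (oddSet G (insert t (S ∪ T)ᶜ) (T \ {t})).ncard := by
    unfold hNum
    rw [oddComps_eq_oddSet, hU'eq]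
  have hNumT : hNum G S T = (oddSet G (S ∪ T)ᶜ (insert t (T \ {t}))).ncard := by
    unfold hNum
    rw [oddComps_eq_oddSet, ← hTins]
  have hdelta' : deltaST G S (T \ {t}) ≤ -2 := by
    unfold deltaST at hdelta ⊢
    rw [hNumT, hsum] at hdelta
    rw [hNum']
    have hm : ((oddSet G (S ∪ T)ᶜ (insert t (T \ {t}))).ncard : ℤ) + 2
        ≤ ((oddSet G (insert t (S ∪ T)ᶜ) (T \ {t})).ncard : ℤ) + (degIn G Sᶜ t : ℤ) := by
      rw [hdegt]
      exact_mod_cast hmaster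
    linarith
  have hbar' : IsBarrier G S (T \ {t}) := ⟨hdisj', hdelta'⟩
  have hlt : (S ∪ T \ {t}).ncard < (S ∪ T).ncard := by
    apply Set.ncard_lt_ncard _ (Set.toFinite _)
    constructor
    · exact Set.union_subset_union_right S Set.diff_subset
    · intro hsup
      have := hsup (Set.mem_union_right S htT)
      rcases this with h | h
      · exact htS h
      · exact htT' h
  exact absurd (hminimal S (T \ {t}) hbar') (not_le.mpr hlt)

end VizingTwoFactor
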